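/- arXiv:1603.04419 — 4 statements merged into one kernel-verified Lean document; each statement's English description precedes it below -/
import Mathlib

section
/- Let C be a D×D real matrix with nonnegative entries. Then the spectral radius of C is strictly less than 1 if and only if all coefficients of the characteristic polynomial of C − I are positive, i.e., writing det(s·I − (C − I)) = s^D + c_{D−1} s^{D−1} + ⋯ + c_1 s + c_0, one has c_k > 0 for all 0 ≤ k ≤ D−1. -/
section AuxProofs

open Polynomial

/-- product of two polynomials with all coefficients (up to the degree) positive has the same. -/
lemma coeff_mul_pos (r q : Polynomial ℝ)
    (hr : ∀ k ≤ r.natDegree, 0 < r.coeff k) (hq : ∀ k ≤ q.natDegree, 0 < q.coeff k) :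
    ∀ k ≤ r.natDegree + q.natDegree, 0 < (r * q).coeff k := by
  intro k hk
  have hnonneg : ∀ (p : Polynomial ℝ), (∀ m ≤ p.natDegree, 0 < p.coeff m) → ∀ m, 0 ≤ p.coeff m := by
    intro p hp m
    rcases le_or_gt m p.natDegree with h | h
    · exact (hp m h).le
    · simp [Polynomial.coeff_eq_zero_of_natDegree_lt h]
  rw [Polynomial.coeff_mul]
  apply Finset.sum_pos'
  · intro x _
    exact mul_nonneg (hnonneg r hr x.1) (hnonneg q hq x.2)
  · refine ⟨(min k r.natDegree, k - min k r.natDegree), ?_, ?_⟩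
    · rw [Finset.HasAntidiagonal.mem_antidiagonal]
      omega
    · exact mul_pos (hr _ (min_le_right _ _)) (hq _ (by omega))

/-- A monic real polynomial all of whose complex roots have negative real part has
positive coefficients. -/
lemma monic_coeff_pos_of_roots_re_neg :
    ∀ (n : ℕ) (p : Polynomial ℝ), p.Monic → p.natDegree = n →
    (∀ z : ℂ, (p.map (algebraMap ℝ ℂ)).IsRoot z → z.re < 0) →
    ∀ k ≤ p.natDegree, 0 < p.coeff k := by
  intro n
  induction n using Nat.strong_induction_on with
  | _ n IH =>
    intro p hmon hdeg hroots k hk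
    rcases Nat.eq_zero_or_pos n with hn0 | hnpos
    · subst hn0
      have hp1 : p = 1 := hmon.natDegree_eq_zero.mp hdeg
      have hk0 : k = 0 := by simpa [hp1] using hk
      simp [hp1, hk0]
    · -- p has positive degree, get a complex root
      set P := p.map (algebraMap ℝ ℂ) with hP
      have hPdeg : P.natDegree = n := by
        rw [hP, p.natDegree_map_eq_of_injective (algebraMap ℝ ℂ).injective, hdeg]
      have hPdegpos : 0 < P.degree :=
        Polynomial.natDegree_pos_iff_degree_pos.mp (by omega)
      obtain ⟨z, hz⟩ := Complex.exists_root hPdegpos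
      have hzre : z.re < 0 := hroots z hz
      -- common step: a monic factor with positive coefficients does the job
      have key : ∀ r : Polynomial ℝ, r.Monic → r ∣ p → 0 < r.natDegree →
          (∀ m ≤ r.natDegree, 0 < r.coeff m) → 0 < p.coeff k := by
        intro r hrmon hdvd hrpos hrc
        obtain ⟨q, hq⟩ := hdvd
        have hqmon : q.Monic := hrmon.of_mul_monic_left (hq ▸ hmon)
        have hdegs : p.natDegree = r.natDegree + q.natDegree := by
          rw [hq, Polynomial.natDegree_mul hrmon.ne_zero hqmon.ne_zero]
        have hqroots : ∀ w : ℂ, (q.map (algebraMap ℝ ℂ)).IsRoot w → w.re < 0 := by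
          intro w hw
          apply hroots
          have hw' : (q.map (algebraMap ℝ ℂ)).eval w = 0 := hw
          show (p.map (algebraMap ℝ ℂ)).eval w = 0
          rw [hq, Polynomial.map_mul, Polynomial.eval_mul, hw', mul_zero]
        have hqc := IH q.natDegree (by omega) q hqmon rfl hqroots
        rw [hq]
        exact coeff_mul_pos r q hrc hqc k (by omega)
      by_cases him : z.im = 0
      · -- real root
        set a := z.re with ha
        have hza : z = ((a : ℝ) : ℂ) := by
          apply Complex.ext <;> simp [him, ha]
        have hroota : p.eval a = 0 := by
          have h0 : (algebraMap ℝ ℂ) a = z := by simpa using hza.symm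
          have h1 : P.eval ((algebraMap ℝ ℂ) a) = 0 := by rw [h0]; exact hz
          rw [hP, Polynomial.eval_map, Polynomial.eval₂_at_apply] at h1
          exact (map_eq_zero_iff _ (algebraMap ℝ ℂ).injective).mp h1
        refine key (X - C a) (Polynomial.monic_X_sub_C a)
          (Polynomial.dvd_iff_isRoot.mpr hroota) (by simp) ?_
        intro m hm
        rw [Polynomial.natDegree_X_sub_C] at hm
        interval_cases m
        · simpa using by linarith
        · simp
      · -- complex conjugate pair
        have hconj : P.IsRoot ((starRingEnd ℂ) z) := by
          show P.eval _ = 0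
          have h1 := Polynomial.aeval_conj p z
          have hz' : P.eval z = 0 := hz
          rw [Polynomial.aeval_def, Polynomial.eval₂_eq_eval_map,
            Polynomial.aeval_def, Polynomial.eval₂_eq_eval_map] at h1
          rw [hP] at hz' ⊢
          rw [h1, hz', map_zero]
        have hzne : ((starRingEnd ℂ) z) ≠ z := by
          intro h
          exact him (Complex.conj_eq_iff_im.mp h)
        -- the real quadratic factor
        set b : ℝ := -(2 * z.re) with hb
        set c : ℝ := Complex.normSq z with hc
        set s : Polynomial ℝ := C b * X + C c with hs
        set r : Polynomial ℝ := X ^ 2 + s with hr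
        have hsdeg : s.degree < 2 := lt_of_le_of_lt (Polynomial.degree_linear_le) (by decide)
        have hrmon : r.Monic := Polynomial.monic_X_pow_add hsdeg
        have hrdeg : r.natDegree = 2 := by
          have : r.degree = 2 := by
            rw [hr]
            rw [Polynomial.degree_add_eq_left_of_degree_lt (by simpa using hsdeg)]
            simp
          exact Polynomial.natDegree_eq_of_degree_eq_some this
        have hmap : r.map (algebraMap ℝ ℂ) = (X - C z) * (X - C ((starRingEnd ℂ) z)) := by
          have e1 : ((algebraMap ℝ ℂ) b) = -(z + (starRingEnd ℂ) z) := by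
            simp [hb, Complex.add_conj]
          have e2 : ((algebraMap ℝ ℂ) c) = z * (starRingEnd ℂ) z := by
            rw [hc, Complex.mul_conj]
            simp
          rw [hr, hs]
          simp only [Polynomial.map_add, Polynomial.map_mul, Polynomial.map_pow,
            Polynomial.map_X, Polynomial.map_C, e1, e2, map_neg, map_add, map_mul]
          ring
        have hdvd2 : (X - C z) * (X - C ((starRingEnd ℂ) z)) ∣ P := by
          obtain ⟨Q, hQ⟩ := Polynomial.dvd_iff_isRoot.mpr hz
          have hQroot : Q.IsRoot ((starRingEnd ℂ) z) := by
            have h1 : P.eval ((starRingEnd ℂ) z) = 0 := hconj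
            rw [hQ, Polynomial.eval_mul] at h1
            have h2 : (X - C z).eval ((starRingEnd ℂ) z) ≠ 0 := by
              simp [sub_ne_zero, hzne]
            exact (mul_eq_zero.mp h1).resolve_left h2
          obtain ⟨Q', hQ'⟩ := Polynomial.dvd_iff_isRoot.mpr hQroot
          exact ⟨Q', by rw [hQ, hQ', mul_assoc]⟩
        have hrdvd : r ∣ p := by
          have h2 : r.map (algebraMap ℝ ℂ) ∣ p.map (algebraMap ℝ ℂ) := by
            rw [hmap, ← hP]; exact hdvd2
          exact (Polynomial.map_dvd_map (algebraMap ℝ ℂ)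
            (algebraMap ℝ ℂ).injective hrmon).mp h2
        have hzne0 : z ≠ 0 := by
          intro h
          rw [h] at hzre
          simp at hzre
        refine key r hrmon hrdvd (by omega) ?_
        intro m hm
        rw [hrdeg] at hm
        have hb0 : 0 < b := by rw [hb]; linarith
        have hc0 : 0 < c := by rw [hc]; exact Complex.normSq_pos.mpr hzne0
        interval_cases m <;>
          simp [hr, hs, Polynomial.coeff_add, Polynomial.coeff_X_pow, Polynomial.coeff_C,
            Polynomial.coeff_C_mul, Polynomial.coeff_X] <;> first | positivity | linarith

open Matrix in
lemma my_charpoly_eval {n : Type*} [Fintype n] [DecidableEq n] {R : Type*} [CommRing R]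
    (A : Matrix n n R) (r : R) : A.charpoly.eval r = (r • (1 : Matrix n n R) - A).det := by
  rw [Matrix.charpoly, _root_.eval_det, Matrix.matPolyEquiv_charmatrix]
  rw [Polynomial.eval_sub, Polynomial.eval_X, Polynomial.eval_C]
  rw [Matrix.smul_one_eq_diagonal, ← Matrix.scalar_apply]

lemma my_mem_spectrum_iff {D : ℕ} (A : Matrix (Fin D) (Fin D) ℂ) (mu : ℂ) :
    mu ∈ spectrum ℂ A ↔ A.charpoly.eval mu = 0 := by
  rw [spectrum.mem_iff, Algebra.algebraMap_eq_smul_one, my_charpoly_eval,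
    Matrix.isUnit_iff_isUnit_det, isUnit_iff_ne_zero, not_ne_iff]

lemma map_sub_one {D : ℕ} (C : Matrix (Fin D) (Fin D) ℝ) :
    (C - 1).map (algebraMap ℝ ℂ) = C.map (algebraMap ℝ ℂ) - 1 := by
  ext i j
  by_cases h : i = j <;>
    simp [Matrix.map_apply, Matrix.sub_apply, Matrix.one_apply, h]

lemma shift_smul_one {R : Type*} [CommRing R] {D : ℕ} (A : Matrix (Fin D) (Fin D) R) (z : R) :
    z • (1 : Matrix (Fin D) (Fin D) R) - (A - 1) = (z + 1) • 1 - A := by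
  rw [add_smul, one_smul]
  abel

def SpectralRadiusLtOne' {D : ℕ} (C : Matrix (Fin D) (Fin D) ℝ) : Prop :=
  ∀ mu ∈ spectrum ℂ (C.map (algebraMap ℝ ℂ)), ‖mu‖ < 1

lemma forward_dir {D : ℕ} (C : Matrix (Fin D) (Fin D) ℝ)
    (h : SpectralRadiusLtOne' C) : ∀ k : ℕ, k < D → 0 < ((C - 1).charpoly).coeff k := by
  intro k hk
  have hmon : ((C - 1).charpoly).Monic := Matrix.charpoly_monic _
  have hdeg : ((C - 1).charpoly).natDegree = D := by
    rw [Matrix.charpoly_natDegree_eq_dim, Fintype.card_fin]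
  refine monic_coeff_pos_of_roots_re_neg D ((C - 1).charpoly) hmon hdeg ?_ k (by omega)
  intro z hz
  have hmap : ((C - 1).charpoly).map (algebraMap ℝ ℂ)
      = (C.map (algebraMap ℝ ℂ) - 1).charpoly := by
    rw [← Matrix.charpoly_map, map_sub_one]
  have hz' : ((C.map (algebraMap ℝ ℂ) - 1).charpoly).eval z = 0 := by
    rw [← hmap]; exact hz
  rw [my_charpoly_eval, shift_smul_one] at hz'
  have hzspec : (z + 1) ∈ spectrum ℂ (C.map (algebraMap ℝ ℂ)) := by
    rw [my_mem_spectrum_iff, my_charpoly_eval]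
    exact hz'
  have habs : ‖z + 1‖ < 1 := h _ hzspec
  have hre : (z + 1).re ≤ ‖z + 1‖ := Complex.re_le_norm _
  have : (z + 1).re = z.re + 1 := by simp
  linarith


open Matrix Filter Topology

attribute [local instance] Matrix.linftyOpNormedAddCommGroup Matrix.linftyOpNormedRing
  Matrix.linftyOpNormedSpace

section Analytic

variable {D : ℕ}

example : CompleteSpace (Matrix (Fin D) (Fin D) ℝ) := inferInstance

lemma pow_entry_nonneg {C : Matrix (Fin D) (Fin D) ℝ} (hC : ∀ i j, 0 ≤ C i j) (n : ℕ) :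
    ∀ i j, 0 ≤ (C ^ n) i j := by
  induction n with
  | zero =>
    intro i j
    by_cases h : i = j <;> simp [pow_zero, Matrix.one_apply, h]
  | succ n ih =>
    intro i j
    rw [pow_succ, Matrix.mul_apply]
    exact Finset.sum_nonneg fun k _ => mul_nonneg (ih i k) (hC k j)

lemma mul_entry_nonneg {A B : Matrix (Fin D) (Fin D) ℝ} (hA : ∀ i j, 0 ≤ A i j)
    (hB : ∀ i j, 0 ≤ B i j) : ∀ i j, 0 ≤ (A * B) i j := by
  intro i j
  rw [Matrix.mul_apply]
  exact Finset.sum_nonneg fun k _ => mul_nonneg (hA i k) (hB k j)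

/-- entry evaluation as a continuous linear map -/
noncomputable def entryCLM (i j : Fin D) : Matrix (Fin D) (Fin D) ℝ →L[ℝ] ℝ :=
  LinearMap.toContinuousLinearMap
    { toFun := fun A => A i j
      map_add' := fun _ _ => rfl
      map_smul' := fun _ _ => rfl }

lemma neumann {X : Matrix (Fin D) (Fin D) ℝ} (hX : ∀ i j, 0 ≤ X i j) (hnorm : ‖X‖ < 1) :
    ∃ Y : Matrix (Fin D) (Fin D) ℝ, (1 - X) * Y = 1 ∧ ∀ i j, 0 ≤ Y i j := by
  have hsum : Summable (fun n : ℕ => X ^ n) := summable_geometric_of_norm_lt_one hnorm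
  refine ⟨∑' n : ℕ, X ^ n, mul_neg_geom_series X hnorm, ?_⟩
  intro i j
  have h1 : (∑' n : ℕ, X ^ n) i j = ∑' n : ℕ, (X ^ n) i j := by
    have := (entryCLM i j).map_tsum hsum
    exact this
  rw [h1]
  exact tsum_nonneg fun n => pow_entry_nonneg hX n i j

end Analytic

section Core
variable {D : ℕ}

lemma inv_one_sub_nonneg {C : Matrix (Fin D) (Fin D) ℝ} (hC : ∀ i j, 0 ≤ C i j)
    (hdet : ∀ t : ℝ, 1 ≤ t → (t • (1 : Matrix (Fin D) (Fin D) ℝ) - C).det ≠ 0) :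
    ∀ i j, 0 ≤ ((1 : Matrix (Fin D) (Fin D) ℝ) - C)⁻¹ i j := by
  set M : ℝ → Matrix (Fin D) (Fin D) ℝ := fun t => t • 1 - C with hM
  set g : ℝ → Matrix (Fin D) (Fin D) ℝ := fun t => (M t)⁻¹ with hg
  have hunit : ∀ t : ℝ, 1 ≤ t → IsUnit (M t).det := fun t ht =>
    isUnit_iff_ne_zero.mpr (hdet t ht)
  have hMg : ∀ t : ℝ, 1 ≤ t → (M t) * g t = 1 := fun t ht =>
    Matrix.mul_nonsing_inv _ (hunit t ht)
  set T0 : ℝ := ‖C‖ + 2 with hT0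
  have hnC : (0:ℝ) ≤ ‖C‖ := norm_nonneg C
  have hT0one : (1 : ℝ) ≤ T0 := by rw [hT0]; linarith
  have hT0pos : (0 : ℝ) < T0 := by rw [hT0]; linarith
  have hT0C : ‖C‖ < T0 := by rw [hT0]; linarith
  -- downward step via Neumann series
  have step : ∀ t : ℝ, 1 ≤ t → (∀ i j, 0 ≤ g t i j) → ∀ s : ℝ, 1 ≤ s →
      t - (‖g t‖ + 1)⁻¹ < s → s ≤ t → ∀ i j, 0 ≤ g s i j := by
    intro t ht hgt s hs1 hslb hsle i j
    have hδnn : 0 ≤ t - s := by linarith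
    have hεpos : (0:ℝ) < (‖g t‖ + 1)⁻¹ := by positivity
    set X := (t - s) • g t with hX
    have hXnn : ∀ i j, 0 ≤ X i j := fun i j => by
      rw [hX, Matrix.smul_apply, smul_eq_mul]
      exact mul_nonneg hδnn (hgt i j)
    have hXnorm : ‖X‖ < 1 := by
      rw [hX, norm_smul, Real.norm_eq_abs, abs_of_nonneg hδnn]
      have h1 : (t - s) * ‖g t‖ ≤ (t - s) * (‖g t‖ + 1) :=
        mul_le_mul_of_nonneg_left (by linarith) hδnn
      have h2 : (t - s) * (‖g t‖ + 1) < (‖g t‖ + 1)⁻¹ * (‖g t‖ + 1) := by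
        apply mul_lt_mul_of_pos_right _ (by positivity)
        linarith
      rw [inv_mul_cancel₀ (by positivity)] at h2
      linarith
    obtain ⟨Y, hY, hYnn⟩ := neumann hXnn hXnorm
    have hfact : M s = M t * (1 - X) := by
      have e1 : M s = M t - (t - s) • 1 := by
        simp only [hM]
        rw [sub_smul]
        abel
      rw [e1, mul_sub, mul_one, hX, Matrix.mul_smul, hMg t ht]
    have hright : M s * (Y * g t) = 1 := by
      rw [hfact, mul_assoc, ← mul_assoc (1 - X), hY, one_mul, hMg t ht]
    have hgs : g s = Y * g t := Matrix.inv_eq_right_inv hright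
    rw [hgs]
    exact mul_entry_nonneg hYnn hgt i j
  -- starting point at T0
  have hstart : ∀ i j, 0 ≤ g T0 i j := by
    set X := T0⁻¹ • C with hX
    have hXnn : ∀ i j, 0 ≤ X i j := fun i j => by
      rw [hX, Matrix.smul_apply, smul_eq_mul]
      exact mul_nonneg (by positivity) (hC i j)
    have hXnorm : ‖X‖ < 1 := by
      rw [hX, norm_smul, Real.norm_eq_abs, abs_of_nonneg (by positivity : (0:ℝ) ≤ T0⁻¹)]
      rw [← inv_mul_cancel₀ hT0pos.ne']
      exact mul_lt_mul_of_pos_left hT0C (by positivity)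
    obtain ⟨Y, hY, hYnn⟩ := neumann hXnn hXnorm
    have hfact : M T0 = T0 • (1 - X) := by
      simp only [hM]
      rw [smul_sub, hX, smul_smul, mul_inv_cancel₀ hT0pos.ne', one_smul]
    have hright : M T0 * (T0⁻¹ • Y) = 1 := by
      rw [hfact, Matrix.mul_smul, Matrix.smul_mul, hY, smul_smul,
        inv_mul_cancel₀ hT0pos.ne', one_smul]
    have hgT0 : g T0 = T0⁻¹ • Y := Matrix.inv_eq_right_inv hright
    intro i j
    rw [hgT0, Matrix.smul_apply, smul_eq_mul]
    exact mul_nonneg (by positivity) (hYnn i j)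
  -- continuity of the entries of g on [1, ∞)
  have hcont : ∀ i j, ContinuousOn (fun t => g t i j) (Set.Ici (1:ℝ)) := by
    intro i j
    have hMc : Continuous M := by
      apply Continuous.sub _ continuous_const
      exact continuous_id.smul continuous_const
    have hdetc : Continuous fun t => (M t).det := hMc.matrix_det
    have hadjc : Continuous fun t => (M t).adjugate i j :=
      (entryCLM i j).continuous.comp hMc.matrix_adjugate
    have hgeq : ∀ t ∈ Set.Ici (1:ℝ), g t i j = ((M t).det)⁻¹ * (M t).adjugate i j := by
      intro t ht
      show (M t)⁻¹ i j = _
      rw [Matrix.inv_def, Matrix.smul_apply, smul_eq_mul, Ring.inverse_eq_inv]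
    apply ContinuousOn.congr _ hgeq
    exact ((hdetc.continuousOn).inv₀ fun t ht => hdet t ht).mul hadjc.continuousOn
  -- infimum argument
  set S : Set ℝ := {t | t ∈ Set.Icc 1 T0 ∧ ∀ s ∈ Set.Icc t T0, ∀ i j, 0 ≤ g s i j} with hS
  have hT0S : T0 ∈ S := by
    refine ⟨⟨hT0one, le_refl _⟩, ?_⟩
    intro s hs i j
    have : s = T0 := le_antisymm hs.2 hs.1
    rw [this]
    exact hstart i j
  have hSne : S.Nonempty := ⟨T0, hT0S⟩
  have hbdd : BddBelow S := ⟨1, fun t ht => ht.1.1⟩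
  set m := sInf S with hm
  have hm1 : 1 ≤ m := le_csInf hSne fun t ht => ht.1.1
  have hmT0 : m ≤ T0 := csInf_le hbdd hT0S
  have hub : ∀ s : ℝ, m < s → s ≤ T0 → ∀ i j, 0 ≤ g s i j := by
    intro s hms hsT0 i j
    obtain ⟨t, htS, hts⟩ := exists_lt_of_csInf_lt hSne hms
    exact htS.2 s ⟨hts.le, hsT0⟩ i j
  have hgm : ∀ i j, 0 ≤ g m i j := by
    rcases eq_or_lt_of_le hmT0 with heq | hlt
    · rw [heq]; exact hstart
    · intro i j
      have hconti : ContinuousWithinAt (fun t => g t i j) (Set.Ioc m T0) m := by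
        apply ((hcont i j).continuousWithinAt (Set.mem_Ici.mpr hm1)).mono
        intro x hx
        exact le_trans hm1 hx.1.le
      have hne : (𝓝[Set.Ioc m T0] m).NeBot := by
        rw [← mem_closure_iff_nhdsWithin_neBot, closure_Ioc hlt.ne]
        exact ⟨le_refl _, hmT0⟩
      refine ge_of_tendsto hconti ?_
      exact eventually_nhdsWithin_of_forall fun s hs => hub s hs.1 hs.2 i j
  have hmS : m ∈ S := by
    refine ⟨⟨hm1, hmT0⟩, ?_⟩
    intro s hs i j
    rcases eq_or_lt_of_le hs.1 with heq | hlt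
    · rw [← heq]; exact hgm i j
    · exact hub s hlt hs.2 i j
  have hnotlt : ¬(1 < m) := by
    intro h1m
    have hεpos : (0:ℝ) < (‖g m‖ + 1)⁻¹ := by positivity
    set ε := (‖g m‖ + 1)⁻¹ with hε
    set t' := max 1 (m - ε / 2) with ht'
    have ht'1 : 1 ≤ t' := le_max_left _ _
    have ht'm : t' < m := max_lt h1m (by linarith)
    have ht'S : t' ∈ S := by
      refine ⟨⟨ht'1, le_trans ht'm.le hmT0⟩, ?_⟩
      intro s hs i j
      rcases lt_or_ge s m with hsm | hms
      · refine step m hm1 hgm s (le_trans ht'1 hs.1) ?_ hsm.le i j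
        have h2 : m - ε / 2 ≤ s := le_trans (le_max_right _ _) hs.1
        linarith
      · exact hmS.2 s ⟨hms, hs.2⟩ i j
    exact absurd (csInf_le hbdd ht'S) (not_le.mpr ht'm)
  have hmeq : m = 1 := le_antisymm (not_lt.mp hnotlt) hm1
  intro i j
  have h1 := hmS.2 1 ⟨hmeq.le, hT0one⟩ i j
  have : M 1 = 1 - C := by simp only [hM, one_smul]
  rw [hg] at h1
  rw [← this]
  exact h1

end Core


section Backward
variable {D : ℕ}

lemma backward_dir (C : Matrix (Fin D) (Fin D) ℝ) (hC : ∀ i j, 0 ≤ C i j)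
    (hcoeff : ∀ k : ℕ, k < D → 0 < ((C - 1).charpoly).coeff k) :
    SpectralRadiusLtOne' C := by
  intro mu hmu
  by_cases hD : D = 0
  · exfalso
    subst hD
    haveI : Subsingleton (Matrix (Fin 0) (Fin 0) ℂ) :=
      ⟨fun a b => by ext i; exact i.elim0⟩
    exact (spectrum.mem_iff.mp hmu) (isUnit_of_subsingleton _)
  have hDpos : 0 < D := Nat.pos_of_ne_zero hD
  have hmon : ((C - 1).charpoly).Monic := Matrix.charpoly_monic _
  have hdeg : ((C - 1).charpoly).natDegree = D := by
    rw [Matrix.charpoly_natDegree_eq_dim, Fintype.card_fin]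
  -- positivity of det (t • 1 - C) for t ≥ 1
  have hdetpos : ∀ t : ℝ, 1 ≤ t → 0 < (t • (1 : Matrix (Fin D) (Fin D) ℝ) - C).det := by
    intro t ht
    have he : (t • (1 : Matrix (Fin D) (Fin D) ℝ) - C).det
        = ((C - 1).charpoly).eval (t - 1) := by
      rw [my_charpoly_eval, shift_smul_one, sub_add_cancel]
    rw [he, Polynomial.eval_eq_sum_range, hdeg]
    apply Finset.sum_pos'
    · intro k hkmem
      rw [Finset.mem_range] at hkmem
      have hck : 0 ≤ ((C - 1).charpoly).coeff k := by
        rcases lt_or_ge k D with hkD | hkD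
        · exact (hcoeff k hkD).le
        · have hkDeq : k = D := by omega
          have hlead := hmon.coeff_natDegree
          rw [hdeg] at hlead
          rw [hkDeq, hlead]
          norm_num
      have hx : (0:ℝ) ≤ t - 1 := by linarith
      positivity
    · refine ⟨0, Finset.mem_range.mpr (by omega), ?_⟩
      simpa using hcoeff 0 hDpos
  have hdetne : ∀ t : ℝ, 1 ≤ t → (t • (1 : Matrix (Fin D) (Fin D) ℝ) - C).det ≠ 0 :=
    fun t ht => (hdetpos t ht).ne'
  have hNnn := inv_one_sub_nonneg hC hdetne
  set N := ((1 : Matrix (Fin D) (Fin D) ℝ) - C)⁻¹ with hN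
  have hdet1 : IsUnit ((1 : Matrix (Fin D) (Fin D) ℝ) - C).det := by
    have := hdetne 1 le_rfl
    rw [one_smul] at this
    exact isUnit_iff_ne_zero.mpr this
  have hNl : N * (1 - C) = 1 := Matrix.nonsing_inv_mul _ hdet1
  have hNC : N * C = N - 1 := by
    have h2 : N - N * C = 1 := by rw [mul_sub, mul_one] at hNl; exact hNl
    exact eq_sub_of_add_eq (sub_eq_iff_eq_add'.mp h2).symm
  -- partial sums of powers are bounded by N entrywise
  have hpart : ∀ mnat : ℕ, (∑ n ∈ Finset.range mnat, C ^ n) = N - N * C ^ mnat := by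
    intro mnat
    induction mnat with
    | zero => simp
    | succ mm ih =>
      rw [Finset.sum_range_succ, ih, pow_succ']
      rw [← mul_assoc, hNC, sub_mul, one_mul]
      abel
  have hsummable : ∀ i j, Summable fun n : ℕ => (C ^ n) i j := by
    intro i j
    apply summable_of_sum_range_le (c := N i j)
      (fun n => pow_entry_nonneg hC n i j)
    intro n
    have h1 := congrArg (fun A : Matrix (Fin D) (Fin D) ℝ => A i j) (hpart n)
    simp only [Matrix.sum_apply, Matrix.sub_apply] at h1
    have h2 : 0 ≤ (N * C ^ n) i j :=
      mul_entry_nonneg hNnn (pow_entry_nonneg hC n) i j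
    rw [h1]
    linarith
  have htend : ∀ i j, Tendsto (fun n : ℕ => (C ^ n) i j) atTop (𝓝 0) :=
    fun i j => (hsummable i j).tendsto_atTop_zero
  -- eigenvector for mu
  set A := C.map (algebraMap ℝ ℂ) with hA
  rw [spectrum.mem_iff] at hmu
  have hdet0 : ((mu • 1 : Matrix (Fin D) (Fin D) ℂ) - A).det = 0 := by
    by_contra h
    apply hmu
    rw [Algebra.algebraMap_eq_smul_one]
    exact (Matrix.isUnit_iff_isUnit_det _).mpr (isUnit_iff_ne_zero.mpr h)
  obtain ⟨v, hv0, hv⟩ := Matrix.exists_mulVec_eq_zero_iff.mpr hdet0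
  have hAv : A.mulVec v = mu • v := by
    rw [Matrix.sub_mulVec, Matrix.smul_mulVec, Matrix.one_mulVec] at hv
    have := sub_eq_zero.mp hv
    exact this.symm
  have hAvn : ∀ n : ℕ, (A ^ n).mulVec v = mu ^ n • v := by
    intro n
    induction n with
    | zero => simp [Matrix.one_mulVec]
    | succ nn ih =>
      rw [pow_succ', ← Matrix.mulVec_mulVec, ih, Matrix.mulVec_smul, hAv,
        smul_smul, ← pow_succ]
  obtain ⟨i, hvi⟩ := Function.ne_iff.mp hv0
  by_contra habs
  push_neg at habs
  have hb : ∀ n : ℕ, ‖v i‖ ≤ ∑ j, (C ^ n) i j * ‖v j‖ := by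
    intro n
    have h1 : (A ^ n).mulVec v i = mu ^ n * v i := by
      rw [hAvn]; simp
    have hApow : A ^ n = (C ^ n).map (algebraMap ℝ ℂ) := by
      rw [hA, ← RingHom.mapMatrix_apply, ← RingHom.mapMatrix_apply, ← map_pow]
    have h2 : ‖mu ^ n * v i‖ = ‖mu‖ ^ n * ‖v i‖ := by
      rw [norm_mul, norm_pow]
    calc ‖v i‖ = 1 * ‖v i‖ := (one_mul _).symm
      _ ≤ ‖mu‖ ^ n * ‖v i‖ := by
          apply mul_le_mul_of_nonneg_right _ (norm_nonneg _)
          exact one_le_pow₀ habs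
      _ = ‖(A ^ n).mulVec v i‖ := by rw [h1, h2]
      _ = ‖∑ j, (A ^ n) i j * v j‖ := by
          rw [Matrix.mulVec, dotProduct]
      _ ≤ ∑ j, ‖(A ^ n) i j * v j‖ := by
          exact norm_sum_le _ _
      _ = ∑ j, (C ^ n) i j * ‖v j‖ := by
          apply Finset.sum_congr rfl
          intro j _
          rw [norm_mul, hApow]
          congr 1
          show ‖(algebraMap ℝ ℂ) ((C ^ n) i j)‖ = _
          rw [Complex.coe_algebraMap, Complex.norm_real, Real.norm_eq_abs,
            abs_of_nonneg (pow_entry_nonneg hC n i j)]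
  have hsum0 : Tendsto (fun n : ℕ => ∑ j, (C ^ n) i j * ‖v j‖) atTop (𝓝 0) := by
    have h0 : (0:ℝ) = ∑ _j : Fin D, 0 := by simp
    rw [h0]
    apply tendsto_finset_sum
    intro j _
    simpa using (htend i j).mul_const ‖v j‖
  have hle : ‖v i‖ ≤ 0 := ge_of_tendsto hsum0 (Filter.Eventually.of_forall hb)
  have : 0 < ‖v i‖ := norm_pos_iff.mpr (by simpa using hvi)
  linarith

end Backward

end AuxProofs

/-- The spectral radius of a real square matrix is `< 1` iff every complex eigenvalue
(element of the spectrum of the matrix viewed over `ℂ`) has absolute value `< 1`. -/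
def SpectralRadiusLtOne {D : ℕ} (C : Matrix (Fin D) (Fin D) ℝ) : Prop :=
  ∀ mu ∈ spectrum ℂ (C.map (algebraMap ℝ ℂ)), ‖mu‖ < 1

/-- For a nonnegative matrix `C`, the spectral radius of `C` is `< 1` iff all the
coefficients `c_0, …, c_{D-1}` of the (monic, degree `D`) characteristic polynomial
`det(s I − (C − 1))` of `C − I` are strictly positive. -/
theorem spectral_radius_lt_one_iff_charpoly_coeffs_pos
    (D : ℕ) (C : Matrix (Fin D) (Fin D) ℝ) (hC : ∀ i j, 0 ≤ C i j) :
    SpectralRadiusLtOne C ↔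
      ∀ k : ℕ, k < D → 0 < ((C - 1).charpoly).coeff k := by
  constructor
  · intro h
    exact forward_dir C (fun mu hmu => h mu hmu)
  · intro h mu hmu
    exact backward_dir C hC h mu hmu
end

section
/- A distribution factorizing over the cycle graph has the reciprocal property: let 𝒳 be a nonempty finite set, N ≥ 3, and let p be a probability mass function on (Fin(N+1) → 𝒳) of the form p(x) = (1/Z)·∏_{k=0}^{N} ψ_k(x_k, x_{k+1 mod N+1}) for nonnegative functions ψ_k : 𝒳 × 𝒳 → ℝ and normalizing constant Z > 0. Then for all 0 ≤ t₀ < t₁ ≤ N, the interior variables {X_r : t₀ < r < t₁} and the exterior variables {X_r : r < t₀ or r > t₁} are conditionally independent given (X_{t₀}, X_{t₁}): for every assignment a of the interior coordinates, b of the exterior coordinates, and values c, d ∈ 𝒳 with P(X_{t₀}=c, X_{t₁}=d) > 0, one has P(X_I = a, X_O = b ∣ X_{t₀}=c, X_{t₁}=d) = P(X_I = a ∣ X_{t₀}=c, X_{t₁}=d) · P(X_O = b ∣ X_{t₀}=c, X_{t₁}=d), where I = {r : t₀ < r < t₁} and O = {r : r < t₀ or r > t₁}. -/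
open Classical in
/-- Probability of an event under a probability mass function `p` on configurations
`Fin (N+1) → 𝒳`: the sum of `p` over all configurations satisfying the event. -/
noncomputable def Pr {N : ℕ} {X : Type} [Fintype X] (p : (Fin (N + 1) → X) → ℝ)
    (A : (Fin (N + 1) → X) → Prop) : ℝ :=
  ∑ x : Fin (N + 1) → X, if A x then p x else 0

open Classical

/-- Merge two configurations: take `x` on the open interior `(t₀, t₁)` and `y` elsewhere. -/
noncomputable def cfmerge {N : ℕ} {X : Type} (t₀ t₁ : Fin (N + 1))
    (x y : Fin (N + 1) → X) : Fin (N + 1) → X :=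
  fun r => if t₀ < r ∧ r < t₁ then x r else y r

lemma cfmerge_interior {N : ℕ} {X : Type} (t₀ t₁ : Fin (N + 1)) (x y : Fin (N + 1) → X)
    {r : Fin (N + 1)} (h1 : t₀ < r) (h2 : r < t₁) : cfmerge t₀ t₁ x y r = x r := by
  simp [cfmerge, h1, h2]

lemma cfmerge_exterior {N : ℕ} {X : Type} (t₀ t₁ : Fin (N + 1)) (x y : Fin (N + 1) → X)
    {r : Fin (N + 1)} (h : ¬(t₀ < r ∧ r < t₁)) : cfmerge t₀ t₁ x y r = y r := by
  simp [cfmerge, h]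

/-- A distribution factorizing over the cycle graph (with index arithmetic mod `N+1`)
has the reciprocal property: given the boundary values `X_{t₀}, X_{t₁}`, the interior
variables and the exterior variables are conditionally independent. -/
theorem cycle_factorization_implies_reciprocal
    {X : Type} [Fintype X] [Nonempty X] (N : ℕ) (hN : 3 ≤ N)
    (ψ : Fin (N + 1) → X → X → ℝ) (hψ : ∀ k a b, 0 ≤ ψ k a b)
    (Z : ℝ) (hZ : 0 < Z)
    (p : (Fin (N + 1) → X) → ℝ)
    (hp : ∀ x, p x = (1 / Z) * ∏ k : Fin (N + 1), ψ k (x k) (x (k + 1)))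
    (hpmf : ∑ x : Fin (N + 1) → X, p x = 1)
    (t₀ t₁ : Fin (N + 1)) (ht : t₀ < t₁)
    (a b : Fin (N + 1) → X) (c d : X)
    (hpos : 0 < Pr p (fun x => x t₀ = c ∧ x t₁ = d)) :
    Pr p (fun x => (∀ r, t₀ < r → r < t₁ → x r = a r) ∧
        (∀ r, r < t₀ ∨ t₁ < r → x r = b r) ∧ x t₀ = c ∧ x t₁ = d) /
      Pr p (fun x => x t₀ = c ∧ x t₁ = d) =
    (Pr p (fun x => (∀ r, t₀ < r → r < t₁ → x r = a r) ∧ x t₀ = c ∧ x t₁ = d) /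
      Pr p (fun x => x t₀ = c ∧ x t₁ = d)) *
    (Pr p (fun x => (∀ r, r < t₀ ∨ t₁ < r → x r = b r) ∧ x t₀ = c ∧ x t₁ = d) /
      Pr p (fun x => x t₀ = c ∧ x t₁ = d)) := by
  have ht1N : (t₁ : ℕ) ≤ N := Nat.lt_succ_iff.mp t₁.isLt
  have ht01 : (t₀ : ℕ) < (t₁ : ℕ) := ht
  -- boundary values of merges
  have hm0 : ∀ x y : Fin (N + 1) → X, cfmerge t₀ t₁ x y t₀ = y t₀ := fun x y =>
    cfmerge_exterior _ _ _ _ (fun h => lt_irrefl _ h.1)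
  have hm1 : ∀ x y : Fin (N + 1) → X, cfmerge t₀ t₁ x y t₁ = y t₁ := fun x y =>
    cfmerge_exterior _ _ _ _ (fun h => lt_irrefl _ h.2)
  -- key factorization swap identity
  have hkey : ∀ x y : Fin (N + 1) → X, x t₀ = c → x t₁ = d → y t₀ = c → y t₁ = d →
      p (cfmerge t₀ t₁ x y) * p (cfmerge t₀ t₁ y x) = p x * p y := by
    intro x y hx0 hx1 hy0 hy1
    simp only [hp]
    have h : (∏ k : Fin (N + 1), ψ k (cfmerge t₀ t₁ x y k) (cfmerge t₀ t₁ x y (k + 1))) *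
        ∏ k : Fin (N + 1), ψ k (cfmerge t₀ t₁ y x k) (cfmerge t₀ t₁ y x (k + 1)) =
        (∏ k : Fin (N + 1), ψ k (x k) (x (k + 1))) *
        ∏ k : Fin (N + 1), ψ k (y k) (y (k + 1)) := by
      rw [← Finset.prod_mul_distrib, ← Finset.prod_mul_distrib]
      refine Finset.prod_congr rfl fun k _ => ?_
      by_cases hk : (t₀ : ℕ) ≤ (k : ℕ) ∧ (k : ℕ) < (t₁ : ℕ)
      · -- interior edge: merge agrees with first argument on both endpoints
        have hklast : k < Fin.last N := by
          rw [Fin.lt_def]; simp; omega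
        have ek : ((k + 1 : Fin (N + 1)) : ℕ) = (k : ℕ) + 1 :=
          Fin.val_add_one_of_lt hklast
        have key : ∀ u v : Fin (N + 1) → X, u t₀ = c → u t₁ = d → v t₀ = c → v t₁ = d →
            cfmerge t₀ t₁ u v k = u k ∧ cfmerge t₀ t₁ u v (k + 1) = u (k + 1) := by
          intro u v hu0 hu1 hv0 hv1
          constructor
          · rcases eq_or_lt_of_le hk.1 with h | h
            · have : k = t₀ := Fin.ext h.symm
              subst this
              rw [hm0, hv0, hu0]
            · exact cfmerge_interior _ _ _ _ (Fin.lt_def.mpr h) (Fin.lt_def.mpr hk.2)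
          · by_cases h : (k : ℕ) + 1 < (t₁ : ℕ)
            · exact cfmerge_interior _ _ _ _ (Fin.lt_def.mpr (by omega))
                (Fin.lt_def.mpr (by omega))
            · have : k + 1 = t₁ := Fin.ext (by omega)
              rw [this, hm1, hv1, hu1]
        obtain ⟨e1, e2⟩ := key x y hx0 hx1 hy0 hy1
        obtain ⟨e3, e4⟩ := key y x hy0 hy1 hx0 hx1
        rw [e1, e2, e3, e4]
      · -- exterior edge: merge agrees with second argument on both endpoints
        have hk' : (k : ℕ) < (t₀ : ℕ) ∨ (t₁ : ℕ) ≤ (k : ℕ) := by omega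
        have e1 : cfmerge t₀ t₁ x y k = y k :=
          cfmerge_exterior _ _ _ _ (by simp only [Fin.lt_def, not_and]; omega)
        have e3 : cfmerge t₀ t₁ y x k = x k :=
          cfmerge_exterior _ _ _ _ (by simp only [Fin.lt_def, not_and]; omega)
        have hcond : ¬(t₀ < k + 1 ∧ k + 1 < t₁) := by
          have := Fin.val_add_one k
          simp only [Fin.lt_def]
          split at this <;> omega
        have e2 : cfmerge t₀ t₁ x y (k + 1) = y (k + 1) := cfmerge_exterior _ _ _ _ hcond
        have e4 : cfmerge t₀ t₁ y x (k + 1) = x (k + 1) := cfmerge_exterior _ _ _ _ hcond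
        rw [e1, e2, e3, e4]; ring
    linear_combination (1 / Z) * (1 / Z) * h
  -- product of two Pr's as a sum over pairs
  have hPr2 : ∀ A C : (Fin (N + 1) → X) → Prop, Pr p A * Pr p C =
      ∑ z : (Fin (N + 1) → X) × (Fin (N + 1) → X),
        if A z.1 ∧ C z.2 then p z.1 * p z.2 else 0 := by
    intro A C
    rw [Pr, Pr, Finset.sum_mul_sum, Fintype.sum_prod_type]
    refine Finset.sum_congr rfl fun x _ => Finset.sum_congr rfl fun y _ => ?_
    by_cases h1 : A x <;> by_cases h2 : C y <;> simp [h1, h2]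
  -- the swap map on pairs is an involution
  set e : ((Fin (N + 1) → X) × (Fin (N + 1) → X)) → ((Fin (N + 1) → X) × (Fin (N + 1) → X)) :=
    fun z => (cfmerge t₀ t₁ z.1 z.2, cfmerge t₀ t₁ z.2 z.1) with he
  have hinv : Function.Involutive e := by
    intro z
    have : ∀ u v : Fin (N + 1) → X,
        cfmerge t₀ t₁ (cfmerge t₀ t₁ u v) (cfmerge t₀ t₁ v u) = u := by
      intro u v; funext r
      by_cases h : t₀ < r ∧ r < t₁
      · rw [cfmerge_interior _ _ _ _ h.1 h.2, cfmerge_interior _ _ _ _ h.1 h.2]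
      · rw [cfmerge_exterior _ _ _ _ h, cfmerge_exterior _ _ _ _ h]
    exact Prod.ext (this z.1 z.2) (this z.2 z.1)
  -- the main identity
  have main : Pr p (fun x => (∀ r, t₀ < r → r < t₁ → x r = a r) ∧
        (∀ r, r < t₀ ∨ t₁ < r → x r = b r) ∧ x t₀ = c ∧ x t₁ = d) *
      Pr p (fun x => x t₀ = c ∧ x t₁ = d) =
      Pr p (fun x => (∀ r, t₀ < r → r < t₁ → x r = a r) ∧ x t₀ = c ∧ x t₁ = d) *
      Pr p (fun x => (∀ r, r < t₀ ∨ t₁ < r → x r = b r) ∧ x t₀ = c ∧ x t₁ = d) := by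
    rw [hPr2, hPr2]
    refine Fintype.sum_bijective e hinv.bijective _ _ fun z => ?_
    obtain ⟨x, y⟩ := z
    simp only [he]
    -- pointwise values of the merges
    have hIx : ∀ r, t₀ < r → r < t₁ → cfmerge t₀ t₁ x y r = x r := fun r h1 h2 =>
      cfmerge_interior _ _ _ _ h1 h2
    have hIy : ∀ r, t₀ < r → r < t₁ → cfmerge t₀ t₁ y x r = y r := fun r h1 h2 =>
      cfmerge_interior _ _ _ _ h1 h2
    have hOx : ∀ r, r < t₀ ∨ t₁ < r → cfmerge t₀ t₁ y x r = x r := fun r h =>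
      cfmerge_exterior _ _ _ _ (by
        simp only [Fin.lt_def, not_and] at h ⊢; omega)
    have hOy : ∀ r, r < t₀ ∨ t₁ < r → cfmerge t₀ t₁ x y r = y r := fun r h =>
      cfmerge_exterior _ _ _ _ (by
        simp only [Fin.lt_def, not_and] at h ⊢; omega)
    have hiff : ((∀ r, t₀ < r → r < t₁ → x r = a r) ∧
        (∀ r, r < t₀ ∨ t₁ < r → x r = b r) ∧ x t₀ = c ∧ x t₁ = d) ∧
        (y t₀ = c ∧ y t₁ = d) ↔
        ((∀ r, t₀ < r → r < t₁ → cfmerge t₀ t₁ x y r = a r) ∧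
          cfmerge t₀ t₁ x y t₀ = c ∧ cfmerge t₀ t₁ x y t₁ = d) ∧
        ((∀ r, r < t₀ ∨ t₁ < r → cfmerge t₀ t₁ y x r = b r) ∧
          cfmerge t₀ t₁ y x t₀ = c ∧ cfmerge t₀ t₁ y x t₁ = d) := by
      rw [hm0, hm1, hm0, hm1]
      constructor
      · rintro ⟨⟨hxi, hxo, hx0, hx1⟩, hy0, hy1⟩
        exact ⟨⟨fun r h1 h2 => (hIx r h1 h2).trans (hxi r h1 h2), hy0, hy1⟩,
          fun r h => (hOx r h).trans (hxo r h), hx0, hx1⟩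
      · rintro ⟨⟨hmi, hy0, hy1⟩, hmo, hx0, hx1⟩
        exact ⟨⟨fun r h1 h2 => (hIx r h1 h2).symm.trans (hmi r h1 h2),
          fun r h => (hOx r h).symm.trans (hmo r h), hx0, hx1⟩, hy0, hy1⟩
    by_cases hc : ((∀ r, t₀ < r → r < t₁ → x r = a r) ∧
        (∀ r, r < t₀ ∨ t₁ < r → x r = b r) ∧ x t₀ = c ∧ x t₁ = d) ∧
        (y t₀ = c ∧ y t₁ = d)
    · rw [if_pos hc, if_pos (hiff.mp hc)]
      exact (hkey x y hc.1.2.2.1 hc.1.2.2.2 hc.2.1 hc.2.2).symm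
    · rw [if_neg hc, if_neg (fun h => hc (hiff.mpr h))]
  have hPB : Pr p (fun x => x t₀ = c ∧ x t₁ = d) ≠ 0 := ne_of_gt hpos
  rw [div_mul_div_comm, div_eq_div_iff hPB (mul_ne_zero hPB hPB)]
  linear_combination Pr p (fun x => x t₀ = c ∧ x t₁ = d) * main
end

section
/- Markov processes are reciprocal (finite state space version): let 𝒳 be a nonempty finite set, N ≥ 2, and let p be a probability mass function on (Fin(N+1) → 𝒳) of the form p(x) = π(x_0)·∏_{k=0}^{N−1} Q_k(x_k, x_{k+1}) for a nonnegative function π : 𝒳 → ℝ and nonnegative functions Q_k : 𝒳 × 𝒳 → ℝ. Then for all 0 ≤ t₀ < t₁ ≤ N, the interior variables {X_r : t₀ < r < t₁} and the exterior variables {X_r : r < t₀ or r > t₁} are conditionally independent given (X_{t₀}, X_{t₁}): for every assignment a of the interior coordinates, b of the exterior coordinates, and values c, d ∈ 𝒳 with P(X_{t₀}=c, X_{t₁}=d) > 0, one has P(X_I = a, X_O = b ∣ X_{t₀}=c, X_{t₁}=d) = P(X_I = a ∣ X_{t₀}=c, X_{t₁}=d) · P(X_O = b ∣ X_{t₀}=c,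 X_{t₁}=d), where I = {r : t₀ < r < t₁} and O = {r : r < t₀ or r > t₁}. -/
open Classical in
lemma ite_mul_ite_zero {A B : Prop} (u v : ℝ) :
    (if A then u else 0) * (if B then v else 0) = if A ∧ B then u * v else 0 := by
  by_cases hA : A <;> by_cases hB : B <;> simp [hA, hB]

/-- Markov processes are reciprocal (finite state space version): for a distribution
`p(x) = π(x₀) ∏_{k=0}^{N-1} Q_k(x_k, x_{k+1})`, the interior and exterior variables of
any interval `[t₀, t₁]` are conditionally independent given `(X_{t₀}, X_{t₁})`. -/
theorem markov_implies_reciprocal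
    {X : Type} [Fintype X] [Nonempty X] (N : ℕ) (hN : 2 ≤ N)
    (pi0 : X → ℝ) (hpi0 : ∀ a, 0 ≤ pi0 a)
    (Q : Fin N → X → X → ℝ) (hQ : ∀ k a b, 0 ≤ Q k a b)
    (p : (Fin (N + 1) → X) → ℝ)
    (hp : ∀ x, p x = pi0 (x 0) * ∏ k : Fin N, Q k (x k.castSucc) (x k.succ))
    (hpmf : ∑ x : Fin (N + 1) → X, p x = 1)
    (t₀ t₁ : Fin (N + 1)) (ht : t₀ < t₁)
    (a b : Fin (N + 1) → X) (c d : X)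
    (hpos : 0 < Pr p (fun x => x t₀ = c ∧ x t₁ = d)) :
    Pr p (fun x => (∀ r, t₀ < r → r < t₁ → x r = a r) ∧
        (∀ r, r < t₀ ∨ t₁ < r → x r = b r) ∧ x t₀ = c ∧ x t₁ = d) /
      Pr p (fun x => x t₀ = c ∧ x t₁ = d) =
    (Pr p (fun x => (∀ r, t₀ < r → r < t₁ → x r = a r) ∧ x t₀ = c ∧ x t₁ = d) /
      Pr p (fun x => x t₀ = c ∧ x t₁ = d)) *
    (Pr p (fun x => (∀ r, r < t₀ ∨ t₁ < r → x r = b r) ∧ x t₀ = c ∧ x t₁ = d) /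
      Pr p (fun x => x t₀ = c ∧ x t₁ = d)) := by
  classical
  -- the mixing map: take coordinates in [t₀,t₁] from x, others from y
  set mix : (Fin (N + 1) → X) → (Fin (N + 1) → X) → (Fin (N + 1) → X) :=
    fun x y r => if t₀ ≤ r ∧ r ≤ t₁ then x r else y r with hmix
  have mix_in : ∀ x y r, t₀ ≤ r → r ≤ t₁ → mix x y r = x r := by
    intro x y r h1 h2; simp [hmix, h1, h2]
  have mix_out : ∀ x y (r : Fin (N+1)), ¬ (t₀ ≤ r ∧ r ≤ t₁) → mix x y r = y r := by
    intro x y r h; simp only [hmix, if_neg h]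
  -- key factorization: if endpoints agree, p(mix x y) * p(mix y x) = p x * p y
  have pmul : ∀ x y : Fin (N + 1) → X, x t₀ = y t₀ → x t₁ = y t₁ →
      p (mix x y) * p (mix y x) = p x * p y := by
    intro x y h0 h1
    rw [hp, hp, hp, hp]
    have hπ : pi0 (mix x y 0) * pi0 (mix y x 0) = pi0 (x 0) * pi0 (y 0) := by
      by_cases h : t₀ ≤ (0 : Fin (N+1)) ∧ (0 : Fin (N+1)) ≤ t₁
      · rw [mix_in _ _ _ h.1 h.2, mix_in _ _ _ h.1 h.2]
      · rw [mix_out _ _ _ h, mix_out _ _ _ h]; ring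
    have hQprod :
        (∏ k : Fin N, Q k (mix x y k.castSucc) (mix x y k.succ)) *
        (∏ k : Fin N, Q k (mix y x k.castSucc) (mix y x k.succ)) =
        (∏ k : Fin N, Q k (x k.castSucc) (x k.succ)) *
        (∏ k : Fin N, Q k (y k.castSucc) (y k.succ)) := by
      rw [← Finset.prod_mul_distrib, ← Finset.prod_mul_distrib]
      apply Finset.prod_congr rfl
      intro k _
      have hval : (k.succ : Fin (N+1)).val = (k.castSucc : Fin (N+1)).val + 1 := by
        simp [Fin.val_succ, Fin.coe_castSucc]
      by_cases hcs : t₀ ≤ k.castSucc ∧ k.castSucc ≤ t₁ <;>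
        by_cases hs : t₀ ≤ k.succ ∧ k.succ ≤ t₁
      · rw [mix_in _ _ _ hcs.1 hcs.2, mix_in _ _ _ hcs.1 hcs.2,
          mix_in _ _ _ hs.1 hs.2, mix_in _ _ _ hs.1 hs.2]
      · -- k.castSucc = t₁
        have hkt : k.castSucc = t₁ := by
          have h2 : (k.castSucc : Fin (N+1)).val ≤ t₁.val := hcs.2
          have h4 : ¬ (t₀.val ≤ (k.succ : Fin (N+1)).val ∧ (k.succ : Fin (N+1)).val ≤ t₁.val) := by
            intro hc; exact hs ⟨Fin.le_def.mpr hc.1, Fin.le_def.mpr hc.2⟩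
          have h5 : t₀.val ≤ (k.castSucc : Fin (N+1)).val := hcs.1
          exact Fin.ext (by omega)
        have hxy : x k.castSucc = y k.castSucc := by rw [hkt]; exact h1
        rw [mix_in _ _ _ hcs.1 hcs.2, mix_in _ _ _ hcs.1 hcs.2,
          mix_out _ _ _ hs, mix_out _ _ _ hs, hxy]
        ring
      · -- k.succ = t₀
        have hkt : k.succ = t₀ := by
          have h4 : ¬ (t₀.val ≤ (k.castSucc : Fin (N+1)).val ∧
              (k.castSucc : Fin (N+1)).val ≤ t₁.val) := by
            intro hc; exact hcs ⟨Fin.le_def.mpr hc.1, Fin.le_def.mpr hc.2⟩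
          have h5 : t₀.val ≤ (k.succ : Fin (N+1)).val := hs.1
          have h6 : (k.succ : Fin (N+1)).val ≤ t₁.val := hs.2
          exact Fin.ext (by omega)
        have hxy : x k.succ = y k.succ := by rw [hkt]; exact h0
        rw [mix_out _ _ _ hcs, mix_out _ _ _ hcs,
          mix_in _ _ _ hs.1 hs.2, mix_in _ _ _ hs.1 hs.2, hxy]
        ring
      · rw [mix_out _ _ _ hcs, mix_out _ _ _ hcs, mix_out _ _ _ hs, mix_out _ _ _ hs]
        ring
    calc pi0 (mix x y 0) * (∏ k : Fin N, Q k (mix x y k.castSucc) (mix x y k.succ)) *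
          (pi0 (mix y x 0) * ∏ k : Fin N, Q k (mix y x k.castSucc) (mix y x k.succ))
        = (pi0 (mix x y 0) * pi0 (mix y x 0)) *
          ((∏ k : Fin N, Q k (mix x y k.castSucc) (mix x y k.succ)) *
           (∏ k : Fin N, Q k (mix y x k.castSucc) (mix y x k.succ))) := by ring
      _ = (pi0 (x 0) * pi0 (y 0)) *
          ((∏ k : Fin N, Q k (x k.castSucc) (x k.succ)) *
           (∏ k : Fin N, Q k (y k.castSucc) (y k.succ))) := by rw [hπ, hQprod]
      _ = _ := by ring
  -- events
  set Icd : (Fin (N + 1) → X) → Prop :=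
    fun x => (∀ r, t₀ < r → r < t₁ → x r = a r) ∧ x t₀ = c ∧ x t₁ = d with hIcd
  set Ocd : (Fin (N + 1) → X) → Prop :=
    fun x => (∀ r, r < t₀ ∨ t₁ < r → x r = b r) ∧ x t₀ = c ∧ x t₁ = d with hOcd
  set IOcd : (Fin (N + 1) → X) → Prop :=
    fun x => (∀ r, t₀ < r → r < t₁ → x r = a r) ∧
      (∀ r, r < t₀ ∨ t₁ < r → x r = b r) ∧ x t₀ = c ∧ x t₁ = d with hIOcd
  set CD : (Fin (N + 1) → X) → Prop := fun x => x t₀ = c ∧ x t₁ = d with hCD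
  have hlt : t₀ ≤ t₁ := le_of_lt ht
  have out_of_out : ∀ r : Fin (N+1), (r < t₀ ∨ t₁ < r) → ¬ (t₀ ≤ r ∧ r ≤ t₁) := by
    intro r hr hc
    rcases hr with hr | hr
    · exact absurd hc.1 (not_le.mpr hr)
    · exact absurd hc.2 (not_le.mpr hr)
  -- the involution on pairs
  set Φ : ((Fin (N+1) → X) × (Fin (N+1) → X)) → ((Fin (N+1) → X) × (Fin (N+1) → X)) :=
    fun z => (mix z.1 z.2, mix z.2 z.1) with hΦ
  have Φinv : Function.Involutive Φ := by
    intro z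
    have h1 : mix (mix z.1 z.2) (mix z.2 z.1) = z.1 := by
      funext r
      by_cases h : t₀ ≤ r ∧ r ≤ t₁
      · rw [mix_in _ _ _ h.1 h.2, mix_in _ _ _ h.1 h.2]
      · rw [mix_out _ _ _ h, mix_out _ _ _ h]
    have h2 : mix (mix z.2 z.1) (mix z.1 z.2) = z.2 := by
      funext r
      by_cases h : t₀ ≤ r ∧ r ≤ t₁
      · rw [mix_in _ _ _ h.1 h.2, mix_in _ _ _ h.1 h.2]
      · rw [mix_out _ _ _ h, mix_out _ _ _ h]
    simp only [hΦ]
    exact Prod.ext h1 h2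
  -- key sum identity
  have key : Pr p Icd * Pr p Ocd = Pr p IOcd * Pr p CD := by
    have e1 : (∑ z : (Fin (N+1) → X) × (Fin (N+1) → X),
          (if Icd z.1 ∧ Ocd z.2 then p z.1 * p z.2 else 0)) = Pr p Icd * Pr p Ocd := by
      rw [Fintype.sum_prod_type, Pr, Pr, Finset.sum_mul_sum]
      refine Finset.sum_congr rfl fun i _ => Finset.sum_congr rfl fun j _ => ?_
      by_cases h1 : Icd i <;> by_cases h2 : Ocd j
      · rw [if_pos (⟨h1, h2⟩ : _ ∧ _), if_pos h1, if_pos h2]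
      · rw [if_neg (fun hc : _ ∧ _ => h2 hc.2), if_pos h1, if_neg h2, mul_zero]
      · rw [if_neg (fun hc : _ ∧ _ => h1 hc.1), if_neg h1, zero_mul]
      · rw [if_neg (fun hc : _ ∧ _ => h1 hc.1), if_neg h1, zero_mul]
    have e2 : (∑ z : (Fin (N+1) → X) × (Fin (N+1) → X),
          (if IOcd z.1 ∧ CD z.2 then p z.1 * p z.2 else 0)) = Pr p IOcd * Pr p CD := by
      rw [Fintype.sum_prod_type, Pr, Pr, Finset.sum_mul_sum]
      refine Finset.sum_congr rfl fun i _ => Finset.sum_congr rfl fun j _ => ?_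
      by_cases h1 : IOcd i <;> by_cases h2 : CD j
      · rw [if_pos (⟨h1, h2⟩ : _ ∧ _), if_pos h1, if_pos h2]
      · rw [if_neg (fun hc : _ ∧ _ => h2 hc.2), if_pos h1, if_neg h2, mul_zero]
      · rw [if_neg (fun hc : _ ∧ _ => h1 hc.1), if_neg h1, zero_mul]
      · rw [if_neg (fun hc : _ ∧ _ => h1 hc.1), if_neg h1, zero_mul]
    rw [← e1, ← e2]
    apply Fintype.sum_bijective Φ Φinv.bijective
    intro z
    obtain ⟨x, y⟩ := z
    simp only [hΦ]
    have hiff : (Icd x ∧ Ocd y) ↔ (IOcd (mix x y) ∧ CD (mix y x)) := by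
      constructor
      · rintro ⟨⟨hIa, hxc, hxd⟩, ⟨hOb, hyc, hyd⟩⟩
        refine ⟨⟨?_, ?_, ?_, ?_⟩, ?_, ?_⟩
        · intro r h1 h2
          rw [mix_in _ _ _ (le_of_lt h1) (le_of_lt h2)]; exact hIa r h1 h2
        · intro r hr
          rw [mix_out _ _ _ (out_of_out r hr)]; exact hOb r hr
        · rw [mix_in _ _ _ (le_refl _) hlt]; exact hxc
        · rw [mix_in _ _ _ hlt (le_refl _)]; exact hxd
        · rw [mix_in _ _ _ (le_refl _) hlt]; exact hyc
        · rw [mix_in _ _ _ hlt (le_refl _)]; exact hyd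
      · rintro ⟨⟨hIa, hOb, huc, hud⟩, hvc, hvd⟩
        refine ⟨⟨?_, ?_, ?_⟩, ?_, ?_, ?_⟩
        · intro r h1 h2
          rw [← mix_in x y r (le_of_lt h1) (le_of_lt h2)]; exact hIa r h1 h2
        · rw [← mix_in x y t₀ (le_refl _) hlt]; exact huc
        · rw [← mix_in x y t₁ hlt (le_refl _)]; exact hud
        · intro r hr
          rw [← mix_out x y r (out_of_out r hr)]; exact hOb r hr
        · rw [← mix_in y x t₀ (le_refl _) hlt]; exact hvc
        · rw [← mix_in y x t₁ hlt (le_refl _)]; exact hvd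
    by_cases h : Icd x ∧ Ocd y
    · rw [if_pos h, if_pos (hiff.mp h)]
      obtain ⟨⟨_, hxc, hxd⟩, ⟨_, hyc, hyd⟩⟩ := h
      exact (pmul x y (hxc.trans hyc.symm) (hxd.trans hyd.symm)).symm
    · rw [if_neg h, if_neg (fun hc => h (hiff.mpr hc))]
  -- conclude by division
  have hS : Pr p CD ≠ 0 := ne_of_gt hpos
  rw [div_mul_div_comm, div_eq_div_iff hS (mul_ne_zero hS hS)]
  linear_combination Pr p CD * key.symm
end

section
/- Convergence of loopy belief propagation for a finite-state hidden reciprocal model: let C_f and C_b be primitive D×D real matrices with nonnegative entries, with unit-norm strictly positive Perron eigenvectors v_f and w_f respectively (A·v_f = λ_f·v_f, λ_f > 0, and similarly for C_b), and let m ∈ ℝ^D have strictly positive entries. For arbitrary initial vectors u_0, z_0 ∈ ℝ^D with strictly positive entries, define the normalized message iterations u_{n+1} = (C_f·u_n)/‖C_f·u_n‖₁ and z_{n+1} = (C_b·z_n)/‖C_b·z_n‖₁, and the belief sequence b_n = (m ⊙ u_n ⊙ z_n)/‖m ⊙ u_n ⊙ z_n‖₁, where ⊙ is the entrywise (Hadamard)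 product. Then u_n converges to v_f/‖v_f‖₁, z_n converges to w_f/‖w_f‖₁, and b_n converges to the steady-state belief b = (m ⊙ v_f ⊙ w_f)/‖m ⊙ v_f ⊙ w_f‖₁. -/
/-- The Euclidean norm on `ℝ^D`. -/
noncomputable def enorm {D : ℕ} (x : Fin D → ℝ) : ℝ :=
  Real.sqrt (∑ i, x i ^ 2)

/-- The ℓ¹ norm on `ℝ^D`. -/
noncomputable def l1norm {D : ℕ} (x : Fin D → ℝ) : ℝ :=
  ∑ i, |x i|

/-- The entrywise (Hadamard) product of vectors. -/
def hadamard {D : ℕ} (x y : Fin D → ℝ) : Fin D → ℝ :=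
  fun i => x i * y i

lemma l1norm_smul_nonneg {D : ℕ} (t : ℝ) (ht : 0 ≤ t) (x : Fin D → ℝ) :
    l1norm (t • x) = t * l1norm x := by
  simp [l1norm, Finset.mul_sum, abs_mul, abs_of_nonneg ht]

lemma l1norm_pos {D : ℕ} (hD : 1 ≤ D) (x : Fin D → ℝ) (hx : ∀ i, 0 < x i) :
    0 < l1norm x := by
  have : Nonempty (Fin D) := Fin.pos_iff_nonempty.mp hD
  exact Finset.sum_pos (fun i _ => abs_pos.mpr (hx i).ne') Finset.univ_nonempty

lemma l1norm_continuous {D : ℕ} : Continuous (l1norm (D := D)) := by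
  unfold l1norm
  exact continuous_finset_sum _ (fun i _ => (continuous_apply i).abs)

noncomputable def nml {D : ℕ} (x : Fin D → ℝ) : Fin D → ℝ := (l1norm x)⁻¹ • x

lemma nml_smul {D : ℕ} (t : ℝ) (ht : 0 < t) (x : Fin D → ℝ) :
    nml (t • x) = nml x := by
  unfold nml
  rw [l1norm_smul_nonneg t ht.le, mul_inv, smul_smul]
  field_simp

lemma nml_continuousAt {D : ℕ} (x : Fin D → ℝ) (hx : l1norm x ≠ 0) :
    ContinuousAt (nml (D := D)) x := by
  unfold nml
  exact ((l1norm_continuous.continuousAt.inv₀ hx).smul continuousAt_id)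

lemma matpow_nonneg {D : ℕ} (A : Matrix (Fin D) (Fin D) ℝ) (hA : ∀ i j, 0 ≤ A i j)
    (n : ℕ) : ∀ i j, 0 ≤ (A ^ n) i j := by
  induction n with
  | zero => intro i j; simp [Matrix.one_apply]; positivity
  | succ n ih =>
    intro i j
    rw [pow_succ, Matrix.mul_apply]
    exact Finset.sum_nonneg fun k _ => mul_nonneg (ih i k) (hA k j)

lemma exists_pos_row {D : ℕ} (A : Matrix (Fin D) (Fin D) ℝ) (hA : ∀ i j, 0 ≤ A i j)
    (h : ℕ) (hh : 0 < h) (hp : ∀ i j, 0 < (A ^ h) i j) (i : Fin D) : ∃ j, 0 < A i j := by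
  by_contra hc
  push_neg at hc
  have hz : ∀ j, A i j = 0 := fun j => le_antisymm (hc j) (hA i j)
  obtain ⟨k, hk⟩ := Nat.exists_eq_succ_of_ne_zero hh.ne'
  have := hp i i
  rw [hk, pow_succ', Matrix.mul_apply] at this
  simp [hz] at this

lemma mulVec_pos {D : ℕ} (A : Matrix (Fin D) (Fin D) ℝ) (hA : ∀ i j, 0 ≤ A i j)
    (hrow : ∀ i, ∃ j, 0 < A i j) (x : Fin D → ℝ) (hx : ∀ i, 0 < x i) :
    ∀ i, 0 < A.mulVec x i := by
  intro i
  obtain ⟨j, hj⟩ := hrow i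
  rw [Matrix.mulVec, dotProduct]
  exact Finset.sum_pos' (fun k _ => mul_nonneg (hA i k) (hx k).le)
    ⟨j, Finset.mem_univ j, mul_pos hj (hx j)⟩

lemma mulVec_mono {D : ℕ} (A : Matrix (Fin D) (Fin D) ℝ) (hA : ∀ i j, 0 ≤ A i j)
    (x y : Fin D → ℝ) (hxy : ∀ i, x i ≤ y i) : ∀ i, A.mulVec x i ≤ A.mulVec y i := by
  intro i
  rw [Matrix.mulVec, dotProduct, Matrix.mulVec, dotProduct]
  exact Finset.sum_le_sum fun j _ => mul_le_mul_of_nonneg_left (hxy j) (hA i j)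

set_option maxHeartbeats 1000000 in
lemma power_iteration {D : ℕ} (hD : 1 ≤ D) (A : Matrix (Fin D) (Fin D) ℝ)
    (hA : ∀ i j, 0 ≤ A i j) (h : ℕ) (hh : 0 < h) (hp : ∀ i j, 0 < (A ^ h) i j)
    (v : Fin D → ℝ) (hv : ∀ i, 0 < v i) (lf : ℝ) (hlf : 0 < lf)
    (heig : A.mulVec v = lf • v) (x0 : Fin D → ℝ) (hx0 : ∀ i, 0 < x0 i) :
    Filter.Tendsto (fun n => nml ((A ^ n).mulVec x0)) Filter.atTop (nhds (nml v)) := by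
  have hne : Nonempty (Fin D) := Fin.pos_iff_nonempty.mp hD
  have hU : (Finset.univ : Finset (Fin D)).Nonempty := Finset.univ_nonempty
  have hrow := exists_pos_row A hA h hh hp
  set x : ℕ → Fin D → ℝ := fun n => (A ^ n).mulVec x0 with hxdef
  have hxstep : ∀ k n, x (k + n) = (A ^ k).mulVec (x n) := by
    intro k n
    simp only [hxdef, Matrix.mulVec_mulVec, ← pow_add]
  have hxpos : ∀ n i, 0 < x n i := by
    intro n
    induction n with
    | zero => simpa [hxdef, Matrix.one_mulVec] using hx0
    | succ n ih =>
      have he : x (n + 1) = A.mulVec (x n) := by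
        have := hxstep 1 n; rw [Nat.add_comm 1 n] at this; simpa [pow_one] using this
      rw [he]; exact mulVec_pos A hA hrow (x n) ih
  have heigk : ∀ k, (A ^ k).mulVec v = (lf ^ k) • v := by
    intro k
    induction k with
    | zero => simp [Matrix.one_mulVec]
    | succ k ih =>
      rw [pow_succ', ← Matrix.mulVec_mulVec, ih, Matrix.mulVec_smul, heig, smul_smul, ← pow_succ]
  set g : ℕ → Fin D → ℝ := fun n i => x n i / (lf ^ n * v i) with hgdef
  have hden : ∀ n i, (0:ℝ) < lf ^ n * v i := fun n i => mul_pos (pow_pos hlf n) (hv i)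
  have hgpos : ∀ n i, 0 < g n i := fun n i => div_pos (hxpos n i) (hden n i)
  have hxg : ∀ n i, x n i = g n i * (lf ^ n * v i) := by
    intro n i; rw [hgdef]; rw [div_mul_cancel₀ _ (hden n i).ne']
  set r : ℕ → ℝ := fun n => Finset.univ.sup' hU (g n) with hrdef
  set s : ℕ → ℝ := fun n => Finset.univ.inf' hU (g n) with hsdef
  have hgr : ∀ n i, g n i ≤ r n := fun n i => Finset.le_sup' (g n) (Finset.mem_univ i)
  have hsg : ∀ n i, s n ≤ g n i := fun n i => Finset.inf'_le (g n) (Finset.mem_univ i)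
  have hsr : ∀ n, s n ≤ r n := fun n => (hsg n (Classical.arbitrary _)).trans (hgr n _)
  have hspos : ∀ n, 0 < s n := by
    intro n
    obtain ⟨i, _, hi⟩ := Finset.exists_mem_eq_inf' hU (g n)
    simp only [hsdef]; rw [hi]; exact hgpos n i
  -- upper/lower bounds on x
  have hxub : ∀ n i, x n i ≤ (r n * lf ^ n) * v i := by
    intro n i
    rw [hxg n i]
    have := mul_le_mul_of_nonneg_right (hgr n i) (hden n i).le
    nlinarith [this]
  have hxlb : ∀ n i, (s n * lf ^ n) * v i ≤ x n i := by
    intro n i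
    rw [hxg n i]
    have := mul_le_mul_of_nonneg_right (hsg n i) (hden n i).le
    nlinarith [this]
  -- generic k-step bound transfer
  have hkub : ∀ k n i, x (k + n) i ≤ (r n * lf ^ n * lf ^ k) * v i := by
    intro k n i
    rw [hxstep k n]
    calc (A ^ k).mulVec (x n) i ≤ (A ^ k).mulVec ((r n * lf ^ n) • v) i :=
          mulVec_mono _ (matpow_nonneg A hA k) _ _ (fun j => by
            simpa using hxub n j) i
      _ = (r n * lf ^ n * lf ^ k) * v i := by
          rw [Matrix.mulVec_smul, heigk k]
          simp [smul_smul]; ring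
  have hklb : ∀ k n i, (s n * lf ^ n * lf ^ k) * v i ≤ x (k + n) i := by
    intro k n i
    rw [hxstep k n]
    calc (s n * lf ^ n * lf ^ k) * v i = (A ^ k).mulVec ((s n * lf ^ n) • v) i := by
          rw [Matrix.mulVec_smul, heigk k]
          simp [smul_smul]; ring
      _ ≤ (A ^ k).mulVec (x n) i :=
          mulVec_mono _ (matpow_nonneg A hA k) _ _ (fun j => by
            simpa using hxlb n j) i
  have hgkub : ∀ k n i, g (k + n) i ≤ r n := by
    intro k n i
    rw [hgdef]
    rw [div_le_iff₀ (hden (k + n) i)]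
    calc x (k + n) i ≤ (r n * lf ^ n * lf ^ k) * v i := hkub k n i
      _ = r n * (lf ^ (k + n) * v i) := by rw [pow_add]; ring
  have hgklb : ∀ k n i, s n ≤ g (k + n) i := by
    intro k n i
    rw [hgdef]
    rw [le_div_iff₀ (hden (k + n) i)]
    calc s n * (lf ^ (k + n) * v i) = (s n * lf ^ n * lf ^ k) * v i := by
          rw [pow_add]; ring
      _ ≤ x (k + n) i := hklb k n i
  have hrmono : ∀ k n, r (k + n) ≤ r n := by
    intro k n
    exact Finset.sup'_le hU _ (fun i _ => hgkub k n i)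
  have hsmono : ∀ k n, s n ≤ s (k + n) := by
    intro k n
    exact Finset.le_inf' hU _ (fun i _ => hgklb k n i)
  -- constants
  set vmin : ℝ := Finset.univ.inf' hU v with hvmindef
  set vmax : ℝ := Finset.univ.sup' hU v with hvmaxdef
  have hvmin : 0 < vmin := by
    obtain ⟨i, _, hi⟩ := Finset.exists_mem_eq_inf' hU v
    rw [hvmindef, hi]; exact hv i
  have hvmax : 0 < vmax := lt_of_lt_of_le hvmin
    ((Finset.inf'_le v (Finset.mem_univ (Classical.arbitrary _))).trans
      (Finset.le_sup' v (Finset.mem_univ _)))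
  set Amin : ℝ := Finset.univ.inf' hU (fun i => Finset.univ.inf' hU (fun j => (A ^ h) i j))
    with hAmindef
  have hAmin : 0 < Amin := by
    obtain ⟨i, _, hi⟩ := Finset.exists_mem_eq_inf' hU
      (fun i => Finset.univ.inf' hU (fun j => (A ^ h) i j))
    rw [hAmindef, hi]
    obtain ⟨j, _, hj⟩ := Finset.exists_mem_eq_inf' hU (fun j => (A ^ h) i j)
    rw [hj]; exact hp i j
  have hAminle : ∀ i j, Amin ≤ (A ^ h) i j := by
    intro i j
    exact (Finset.inf'_le _ (Finset.mem_univ i)).trans (Finset.inf'_le _ (Finset.mem_univ j))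
  set θ : ℝ := Amin * vmin / (lf ^ h * vmax) with hθdef
  have hθ : 0 < θ := div_pos (mul_pos hAmin hvmin) (mul_pos (pow_pos hlf h) hvmax)
  -- contraction
  have hcontr : ∀ n, r (h + n) - s (h + n) ≤ (1 - θ) * (r n - s n) := by
    intro n
    -- w := x n - (s n * lf^n) • v
    set w : Fin D → ℝ := fun j => x n j - (s n * lf ^ n) * v j with hwdef
    have hw0 : ∀ j, 0 ≤ w j := fun j => by
      have := hxlb n j; rw [hwdef]; simp; linarith
    obtain ⟨j1, _, hj1⟩ := Finset.exists_mem_eq_sup' hU (g n)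
    have hr1 : r n = g n j1 := hj1
    have hwj1 : w j1 = ((r n - s n) * lf ^ n) * v j1 := by
      rw [hwdef]; simp only
      rw [hxg n j1, hr1]
      ring
    have hxsplit : x n = (s n * lf ^ n) • v + w := by
      funext j; rw [hwdef]; simp
    have hAw : ∀ i, x (h + n) i = (s n * lf ^ n * lf ^ h) * v i + (A ^ h).mulVec w i := by
      intro i
      rw [hxstep h n, hxsplit, Matrix.mulVec_add, Matrix.mulVec_smul, heigk h]
      simp [smul_smul]
    have hAwlb : ∀ i, (Amin * ((r n - s n) * lf ^ n) * vmin) ≤ (A ^ h).mulVec w i := by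
      intro i
      have hterm : (A ^ h) i j1 * w j1 ≤ ∑ j, (A ^ h) i j * w j :=
        Finset.single_le_sum (fun j _ => mul_nonneg (matpow_nonneg A hA h i j) (hw0 j))
          (Finset.mem_univ j1)
      have h1 : Amin * ((r n - s n) * lf ^ n) * vmin ≤ (A ^ h) i j1 * w j1 := by
        rw [hwj1]
        have hrs : 0 ≤ r n - s n := by linarith [hsr n]
        have hvj1 : vmin ≤ v j1 := Finset.inf'_le v (Finset.mem_univ j1)
        have hA1 : Amin ≤ (A ^ h) i j1 := hAminle i j1
        have hc0 : (0:ℝ) ≤ (r n - s n) * lf ^ n := mul_nonneg hrs (pow_pos hlf n).le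
        have key2 := mul_le_mul hA1 (mul_le_mul_of_nonneg_left hvj1 hc0)
          (mul_nonneg hc0 hvmin.le) (le_trans hAmin.le hA1)
        nlinarith [key2]
      exact h1.trans (by simpa [Matrix.mulVec, dotProduct] using hterm)
    have hslb : s n + θ * (r n - s n) ≤ s (h + n) := by
      apply Finset.le_inf' hU
      intro i _
      rw [hgdef]
      rw [le_div_iff₀ (hden (h + n) i)]
      rw [hAw i]
      have h2 : θ * (r n - s n) * (lf ^ (h + n) * v i) ≤ (A ^ h).mulVec w i := by
        refine le_trans ?_ (hAwlb i)
        rw [hθdef]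
        have hvi : v i ≤ vmax := Finset.le_sup' v (Finset.mem_univ i)
        have hrs : 0 ≤ r n - s n := by linarith [hsr n]
        have key : θ * (lf ^ (h + n) * v i) ≤ Amin * lf ^ n * vmin := by
          rw [hθdef, pow_add, div_mul_eq_mul_div, div_le_iff₀ (mul_pos (pow_pos hlf h) hvmax)]
          have : Amin * vmin * (lf ^ h * lf ^ n * v i) ≤
              Amin * lf ^ n * vmin * (lf ^ h * vmax) := by
            have := mul_le_mul_of_nonneg_left hvi
              (mul_nonneg (mul_nonneg (mul_nonneg hAmin.le hvmin.le) (pow_pos hlf h).le)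
                (pow_pos hlf n).le)
            nlinarith [this]
          linarith [this]
        calc θ * (r n - s n) * (lf ^ (h + n) * v i)
            = (r n - s n) * (θ * (lf ^ (h + n) * v i)) := by ring
          _ ≤ (r n - s n) * (Amin * lf ^ n * vmin) := mul_le_mul_of_nonneg_left key hrs
          _ = Amin * ((r n - s n) * lf ^ n) * vmin := by ring
      have h3 : (s n) * (lf ^ (h + n) * v i) = (s n * lf ^ n * lf ^ h) * v i := by
        rw [pow_add]; ring
      nlinarith [h2, h3]
    have hrub : r (h + n) ≤ r n := hrmono h n
    have := hslb
    rw [hθdef] at *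
    nlinarith [hrub, hslb]
  set d : ℕ → ℝ := fun n => r n - s n with hddef
  have hd0 : ∀ n, 0 ≤ d n := fun n => by simp only [hddef]; linarith [hsr n]
  have hdmono : Antitone d := by
    apply antitone_nat_of_succ_le
    intro n
    have h1 := hrmono 1 n
    have h2 := hsmono 1 n
    rw [Nat.add_comm 1 n] at h1 h2
    simp only [hddef]
    linarith
  set q : ℝ := max (1 - θ) 0 with hqdef
  have hq0 : (0:ℝ) ≤ q := le_max_right _ _
  have hq1 : q < 1 := by
    rw [hqdef]; apply max_lt <;> linarith
  have hcontr' : ∀ n, d (h + n) ≤ q * d n := by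
    intro n
    calc d (h + n) ≤ (1 - θ) * d n := hcontr n
      _ ≤ q * d n := mul_le_mul_of_nonneg_right (le_max_left _ _) (hd0 n)
  have hdk : ∀ k, d (h * k) ≤ q ^ k * d 0 := by
    intro k
    induction k with
    | zero => simp
    | succ k ih =>
      have he : h * (k + 1) = h + h * k := by ring
      rw [he]
      calc d (h + h * k) ≤ q * d (h * k) := hcontr' _
        _ ≤ q * (q ^ k * d 0) := mul_le_mul_of_nonneg_left ih hq0
        _ = q ^ (k + 1) * d 0 := by ring
  have hdn : ∀ n, d n ≤ q ^ (n / h) * d 0 := by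
    intro n
    have h1 : h * (n / h) ≤ n := by
      simpa [Nat.mul_comm] using Nat.div_mul_le_self n h
    exact (hdmono h1).trans (hdk (n / h))
  have hdiv : Filter.Tendsto (fun n : ℕ => n / h) Filter.atTop Filter.atTop := by
    apply Filter.tendsto_atTop.mpr
    intro b
    filter_upwards [Filter.eventually_ge_atTop (b * h)] with n hn
    exact (Nat.le_div_iff_mul_le hh).mpr hn
  have hqk : Filter.Tendsto (fun n : ℕ => q ^ (n / h) * d 0) Filter.atTop (nhds 0) := by
    have := ((tendsto_pow_atTop_nhds_zero_of_lt_one hq0 hq1).comp hdiv).mul_const (d 0)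
    simpa using this
  have hdzero : Filter.Tendsto d Filter.atTop (nhds 0) := squeeze_zero hd0 hdn hqk
  have hrant : Antitone r := antitone_nat_of_succ_le (fun n => by
    have := hrmono 1 n; rwa [Nat.add_comm] at this)
  have hs0le : ∀ n, s 0 ≤ r n := by
    intro n
    have := hsmono n 0
    rw [Nat.add_zero] at this
    linarith [hsr n]
  have hrbdd : BddBelow (Set.range r) := by
    refine ⟨s 0, ?_⟩
    rintro _ ⟨n, rfl⟩
    exact hs0le n
  set c : ℝ := ⨅ n, r n with hcdef
  have hrc : Filter.Tendsto r Filter.atTop (nhds c) := tendsto_atTop_ciInf hrant hrbdd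
  have hsc : Filter.Tendsto s Filter.atTop (nhds c) := by
    have he : s = fun n => r n - d n := by funext n; simp [hddef]
    rw [he]
    simpa using hrc.sub hdzero
  have hcpos : 0 < c := by
    have : s 0 ≤ c := le_ciInf hs0le
    linarith [hspos 0]
  have hy : Filter.Tendsto (fun n => fun i => g n i * v i) Filter.atTop (nhds (c • v)) := by
    rw [tendsto_pi_nhds]
    intro i
    have hgi : Filter.Tendsto (fun n => g n i) Filter.atTop (nhds c) :=
      tendsto_of_tendsto_of_tendsto_of_le_of_le hsc hrc (fun n => hsg n i) (fun n => hgr n i)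
    simpa using hgi.mul_const (v i)
  have hnmleq : ∀ n, nml (x n) = nml (fun i => g n i * v i) := by
    intro n
    have he : (fun i => g n i * v i) = ((lf ^ n)⁻¹ : ℝ) • x n := by
      funext i
      have h1 := (hv i).ne'
      have h2 := (pow_pos hlf n).ne'
      simp only [hgdef, Pi.smul_apply, smul_eq_mul]
      field_simp
    rw [he, nml_smul _ (by positivity)]
  have hcv : ∀ i, 0 < (c • v) i := fun i => by
    rw [Pi.smul_apply, smul_eq_mul]; exact mul_pos hcpos (hv i)
  have hl1 : l1norm (c • v) ≠ 0 := (l1norm_pos hD _ hcv).ne'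
  have hfinal := (nml_continuousAt (c • v) hl1).tendsto.comp hy
  rw [show nml (c • v) = nml v from nml_smul c hcpos v] at hfinal
  have he2 : (fun n => nml ((A ^ n).mulVec x0)) = fun n => nml (fun i => g n i * v i) := by
    funext n; exact hnmleq n
  rw [he2]
  exact hfinal


lemma pow_mulVec_pos {D : ℕ} (A : Matrix (Fin D) (Fin D) ℝ) (hA : ∀ i j, 0 ≤ A i j)
    (hrow : ∀ i, ∃ j, 0 < A i j) (x0 : Fin D → ℝ) (hx0 : ∀ i, 0 < x0 i) :
    ∀ n i, 0 < (A ^ n).mulVec x0 i := by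
  intro n
  induction n with
  | zero => simpa [Matrix.one_mulVec] using hx0
  | succ n ih =>
    have he : (A ^ (n + 1)).mulVec x0 = A.mulVec ((A ^ n).mulVec x0) := by
      rw [Matrix.mulVec_mulVec, ← pow_succ']
    rw [he]
    exact mulVec_pos A hA hrow _ ih

lemma iter_repr {D : ℕ} (hD : 1 ≤ D) (A : Matrix (Fin D) (Fin D) ℝ)
    (hA : ∀ i j, 0 ≤ A i j) (hrow : ∀ i, ∃ j, 0 < A i j)
    (u0 : Fin D → ℝ) (hu0 : ∀ i, 0 < u0 i)
    (u : ℕ → Fin D → ℝ) (h0 : u 0 = u0)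
    (hrec : ∀ n, u (n + 1) = (l1norm (A.mulVec (u n)))⁻¹ • A.mulVec (u n)) :
    ∀ n, u (n + 1) = nml ((A ^ (n + 1)).mulVec u0) := by
  intro n
  induction n with
  | zero => rw [hrec 0, h0, zero_add, pow_one]; rfl
  | succ n ih =>
    have hxpos := pow_mulVec_pos A hA hrow u0 hu0 (n + 1)
    have hl : 0 < l1norm ((A ^ (n + 1)).mulVec u0) := l1norm_pos hD _ hxpos
    rw [hrec (n + 1), ih]
    have hstep : A.mulVec (nml ((A ^ (n + 1)).mulVec u0)) =
        (l1norm ((A ^ (n + 1)).mulVec u0))⁻¹ • ((A ^ (n + 2)).mulVec u0) := by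
      unfold nml
      rw [Matrix.mulVec_smul, Matrix.mulVec_mulVec, ← pow_succ']
    rw [hstep]
    exact nml_smul _ (inv_pos.mpr hl) _

lemma nml_tendsto_of_iter {D : ℕ} (hD : 1 ≤ D) (A : Matrix (Fin D) (Fin D) ℝ)
    (hA : ∀ i j, 0 ≤ A i j) (h : ℕ) (hh : 0 < h) (hp : ∀ i j, 0 < (A ^ h) i j)
    (v : Fin D → ℝ) (hv : ∀ i, 0 < v i) (lf : ℝ) (hlf : 0 < lf)
    (heig : A.mulVec v = lf • v) (u0 : Fin D → ℝ) (hu0 : ∀ i, 0 < u0 i)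
    (u : ℕ → Fin D → ℝ) (h0 : u 0 = u0)
    (hrec : ∀ n, u (n + 1) = (l1norm (A.mulVec (u n)))⁻¹ • A.mulVec (u n)) :
    Filter.Tendsto u Filter.atTop (nhds (nml v)) := by
  have hrow := exists_pos_row A hA h hh hp
  have hpi := power_iteration hD A hA h hh hp v hv lf hlf heig u0 hu0
  apply hpi.congr'
  filter_upwards [Filter.eventually_ge_atTop 1] with n hn
  obtain ⟨k, rfl⟩ := Nat.exists_eq_succ_of_ne_zero (by omega : n ≠ 0)
  exact (iter_repr hD A hA hrow u0 hu0 u h0 hrec k).symm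

/-- Convergence of loopy belief propagation for a finite-state hidden reciprocal model:
the normalized forward and backward message iterations driven by the primitive
nonnegative matrices `C_f` and `C_b` converge to the (ℓ¹-normalized) Perron
eigenvectors `v_f`, `w_f`, and the beliefs converge to the steady-state belief
`(m ⊙ v_f ⊙ w_f)/‖m ⊙ v_f ⊙ w_f‖₁`. -/
theorem loopy_BP_convergence_hidden_reciprocal_model
    (D : ℕ) (hD : 1 ≤ D)
    (Cf Cb : Matrix (Fin D) (Fin D) ℝ)
    (hCf : ∀ i j, 0 ≤ Cf i j) (hCb : ∀ i j, 0 ≤ Cb i j)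
    (hf : ℕ) (hhf : 0 < hf) (hCfprim : ∀ i j, 0 < (Cf ^ hf) i j)
    (hb : ℕ) (hhb : 0 < hb) (hCbprim : ∀ i j, 0 < (Cb ^ hb) i j)
    (vf wf : Fin D → ℝ) (lf lb : ℝ)
    (hvf : ∀ i, 0 < vf i) (hvfnorm : _root_.enorm vf = 1) (hlf : 0 < lf)
    (hvfeig : Cf.mulVec vf = lf • vf)
    (hwf : ∀ i, 0 < wf i) (hwfnorm : _root_.enorm wf = 1) (hlb : 0 < lb)
    (hwfeig : Cb.mulVec wf = lb • wf)
    (m : Fin D → ℝ) (hm : ∀ i, 0 < m i)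
    (u0 z0 : Fin D → ℝ) (hu0 : ∀ i, 0 < u0 i) (hz0 : ∀ i, 0 < z0 i)
    (u z : ℕ → Fin D → ℝ)
    (hu_init : u 0 = u0)
    (hu_rec : ∀ n, u (n + 1) = (l1norm (Cf.mulVec (u n)))⁻¹ • Cf.mulVec (u n))
    (hz_init : z 0 = z0)
    (hz_rec : ∀ n, z (n + 1) = (l1norm (Cb.mulVec (z n)))⁻¹ • Cb.mulVec (z n))
    (b : ℕ → Fin D → ℝ)
    (hb_def : ∀ n, b n =
      (l1norm (hadamard m (hadamard (u n) (z n))))⁻¹ • hadamard m (hadamard (u n) (z n))) :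
    Filter.Tendsto u Filter.atTop (nhds ((l1norm vf)⁻¹ • vf)) ∧
    Filter.Tendsto z Filter.atTop (nhds ((l1norm wf)⁻¹ • wf)) ∧
    Filter.Tendsto b Filter.atTop
      (nhds ((l1norm (hadamard m (hadamard vf wf)))⁻¹ • hadamard m (hadamard vf wf))) := by
  have hu_tend : Filter.Tendsto u Filter.atTop (nhds (nml vf)) :=
    nml_tendsto_of_iter hD Cf hCf hf hhf hCfprim vf hvf lf hlf hvfeig u0 hu0 u hu_init hu_rec
  have hz_tend : Filter.Tendsto z Filter.atTop (nhds (nml wf)) :=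
    nml_tendsto_of_iter hD Cb hCb hb hhb hCbprim wf hwf lb hlb hwfeig z0 hz0 z hz_init hz_rec
  refine ⟨hu_tend, hz_tend, ?_⟩
  have hl1v : 0 < l1norm vf := l1norm_pos hD vf hvf
  have hl1w : 0 < l1norm wf := l1norm_pos hD wf hwf
  have hUpos : ∀ i, 0 < nml vf i := fun i => by
    unfold nml; rw [Pi.smul_apply, smul_eq_mul]
    exact mul_pos (inv_pos.mpr hl1v) (hvf i)
  have hZpos : ∀ i, 0 < nml wf i := fun i => by
    unfold nml; rw [Pi.smul_apply, smul_eq_mul]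
    exact mul_pos (inv_pos.mpr hl1w) (hwf i)
  set P : Fin D → ℝ := hadamard m (hadamard (nml vf) (nml wf)) with hPdef
  have hPpos : ∀ i, 0 < P i := fun i => by
    rw [hPdef]; unfold hadamard
    exact mul_pos (hm i) (mul_pos (hUpos i) (hZpos i))
  have hl1P : l1norm P ≠ 0 := (l1norm_pos hD P hPpos).ne'
  have hHcont : Continuous (fun p : (Fin D → ℝ) × (Fin D → ℝ) =>
      hadamard m (hadamard p.1 p.2)) := by
    unfold hadamard
    exact continuous_pi (fun i => continuous_const.mul
      (((continuous_apply i).comp continuous_fst).mul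
        ((continuous_apply i).comp continuous_snd)))
  have hprod : Filter.Tendsto (fun n => (u n, z n)) Filter.atTop
      (nhds (nml vf, nml wf)) := hu_tend.prodMk_nhds hz_tend
  have hcont : ContinuousAt (fun p : (Fin D → ℝ) × (Fin D → ℝ) =>
      nml (hadamard m (hadamard p.1 p.2))) (nml vf, nml wf) :=
    (nml_continuousAt P hl1P).comp (x := (nml vf, nml wf))
      (f := fun p : (Fin D → ℝ) × (Fin D → ℝ) => hadamard m (hadamard p.1 p.2)) hHcont.continuousAt
  have hcomp := hcont.tendsto.comp hprod
  have hbeq : b = fun n => nml (hadamard m (hadamard (u n) (z n))) := by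
    funext n; rw [hb_def n]; rfl
  have hPscale : P = ((l1norm vf)⁻¹ * (l1norm wf)⁻¹) • hadamard m (hadamard vf wf) := by
    funext i
    rw [hPdef]; unfold nml hadamard
    simp only [Pi.smul_apply, smul_eq_mul]
    ring
  have hval : nml P = nml (hadamard m (hadamard vf wf)) := by
    rw [hPscale]
    exact nml_smul _ (mul_pos (inv_pos.mpr hl1v) (inv_pos.mpr hl1w)) _
  rw [hbeq]
  have : (fun p : (Fin D → ℝ) × (Fin D → ℝ) => nml (hadamard m (hadamard p.1 p.2))) ∘
      (fun n => (u n, z n)) = fun n => nml (hadamard m (hadamard (u n) (z n))) := rfl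
  rw [this] at hcomp
  rw [show nml P = nml (hadamard m (hadamard vf wf)) from hval] at hcomp
  exact hcomp
end
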